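/- For the metric q_{μν} = (1/α) η_{μν} − (β/(α(α+β)w)) ∂_μΦ ∂_νΦ in 4 dimensions with α > 0, α + β > 0, w ≠ 0, the determinants satisfy √(−det q) = √(−det η) / (α √(α(α+β))). -/

import Mathlib

open Matrix

/-- For the covariant metric
`q_{μν} = (1/α) η_{μν} − (β/(α(α+β)w)) ∂_μΦ ∂_νΦ` in 4 dimensions, with
`η_{μν}` Lorentzian (`det η < 0`), `α > 0`, `α+β > 0`, `w ≠ 0`, the determinants
satisfy `√(−det q) = √(−det η) / (α √(α(α+β)))`
(equivalently `det q = det η / (α³(α+β))`). -/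
theorem stmt2 (ηcov ηcon : Matrix (Fin 4) (Fin 4) ℝ)
    (hsymm : ηcov.IsSymm) (hinv : ηcov * ηcon = 1) (hinv' : ηcon * ηcov = 1)
    (hdet : ηcov.det < 0)
    (dΦ : Fin 4 → ℝ) (α β : ℝ) (hα : 0 < α) (hαβ : 0 < α + β)
    (w : ℝ) (hw : w = dΦ ⬝ᵥ ηcon.mulVec dΦ) (hw0 : w ≠ 0)
    (qcov : Matrix (Fin 4) (Fin 4) ℝ)
    (hq : qcov = (1 / α) • ηcov - (β / (α * (α + β) * w)) • vecMulVec dΦ dΦ) :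
    Real.sqrt (-qcov.det) = Real.sqrt (-ηcov.det) / (α * Real.sqrt (α * (α + β))) ∧
    qcov.det = ηcov.det / (α ^ 3 * (α + β)) := by
  have hα0 : α ≠ 0 := ne_of_gt hα
  have hαβ0 : α + β ≠ 0 := ne_of_gt hαβ
  set c : ℝ := β / (α * (α + β) * w) with hc
  -- rewrite qcov as (1/α) • (ηcov + col u * row dΦ)
  have hu : qcov = (1 / α) • (ηcov + replicateCol (Fin 1) ((-(α * c)) • dΦ) * replicateRow (Fin 1) dΦ) := by
    rw [hq]
    ext i j
    simp [Matrix.mul_apply, Matrix.replicateCol_apply, Matrix.replicateRow_apply, vecMulVec_apply,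
      Matrix.smul_apply, Matrix.add_apply, Matrix.sub_apply]
    field_simp
    ring
  have hunit : IsUnit ηcov.det := (isUnit_iff_ne_zero).2 (ne_of_lt hdet)
  have hinvM : ηcov⁻¹ = ηcon := Matrix.inv_eq_right_inv hinv
  have hfac : ηcov + replicateCol (Fin 1) ((-(α * c)) • dΦ) * replicateRow (Fin 1) dΦ
      = ηcov * (1 + replicateCol (Fin 1) (ηcon *ᵥ ((-(α * c)) • dΦ)) * replicateRow (Fin 1) dΦ) := by
    rw [Matrix.mul_add, mul_one, ← Matrix.mul_assoc, ← Matrix.replicateCol_mulVec,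
      Matrix.mulVec_mulVec, hinv, Matrix.one_mulVec]
  have hdet1 : (ηcov + replicateCol (Fin 1) ((-(α * c)) • dΦ) * replicateRow (Fin 1) dΦ).det
      = ηcov.det * (1 - α * c * w) := by
    rw [hfac, Matrix.det_mul, show Matrix.det (1 + replicateCol (Fin 1) (ηcon *ᵥ ((-(α * c)) • dΦ)) * replicateRow (Fin 1) dΦ : Matrix (Fin 4) (Fin 4) ℝ) = 1 + dΦ ⬝ᵥ (ηcon *ᵥ ((-(α * c)) • dΦ)) from
        Matrix.det_one_add_replicateCol_mul_replicateRow (ι := Fin 1) (ηcon *ᵥ ((-(α * c)) • dΦ)) dΦ,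
      Matrix.mulVec_smul, dotProduct_smul, ← hw, smul_eq_mul]
    ring
  have hcw : α * c * w = β / (α + β) := by
    rw [hc]; field_simp
  have hdetq : qcov.det = ηcov.det / (α ^ 3 * (α + β)) := by
    rw [hu, Matrix.det_smul, hdet1, hcw]
    have : (1 : ℝ) - β / (α + β) = α / (α + β) := by field_simp; ring
    rw [this]
    rw [Fintype.card_fin]
    field_simp
  refine ⟨?_, hdetq⟩
  rw [hdetq]
  have h1 : -(ηcov.det / (α ^ 3 * (α + β))) = (-ηcov.det) / (α ^ 3 * (α + β)) := by ring
  have h2 : (0:ℝ) ≤ -ηcov.det := by linarith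
  rw [h1, Real.sqrt_div h2]
  congr 1
  have h3 : α ^ 3 * (α + β) = α ^ 2 * (α * (α + β)) := by ring
  rw [h3, Real.sqrt_mul (sq_nonneg α), Real.sqrt_sq hα.le]
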